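/- Let E and F be Banach spaces with E ≠ {0}, let n ≥ 1 and let 0 < s ≤ r < ∞. If every continuous n-homogeneous polynomial P : E → F is absolutely (r;s)-summing at every point of E, then every continuous linear mapping T : E → F is absolutely (r;s)-summing, i.e. ∑_j ‖T(x_j)‖^r < ∞ for every sequence (x_j) ∈ ℓ_s^w(E). -/

import Mathlib

open scoped ENNReal NNReal

noncomputable section

open Filter

lemma aux_add_rpow_le {a b r : ℝ} (ha : 0 ≤ a) (hb : 0 ≤ b) (hr : 0 ≤ r) :
    (a + b) ^ r ≤ 2 ^ r * (a ^ r + b ^ r) := by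
  have h1 : a + b ≤ 2 * max a b := by
    rcases le_total a b with h | h
    · have := le_max_right a b; calc a + b ≤ b + b := by linarith
        _ = 2 * b := by ring
        _ ≤ 2 * max a b := by linarith
    · have := le_max_left a b; calc a + b ≤ a + a := by linarith
        _ = 2 * a := by ring
        _ ≤ 2 * max a b := by linarith
  calc (a + b) ^ r ≤ (2 * max a b) ^ r :=
        Real.rpow_le_rpow (by linarith) h1 hr
    _ = 2 ^ r * (max a b) ^ r := Real.mul_rpow (by norm_num) (le_max_of_le_left ha)
    _ ≤ 2 ^ r * (a ^ r + b ^ r) := by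
        gcongr
        rcases le_total a b with h | h
        · rw [max_eq_right h]
          have : 0 ≤ a ^ r := Real.rpow_nonneg ha r
          linarith
        · rw [max_eq_left h]
          have : 0 ≤ b ^ r := Real.rpow_nonneg hb r
          linarith

lemma aux_pow_sub_one {𝕜 : Type*} [RCLike 𝕜] {z : 𝕜} (hz : ‖z‖ ≤ 1) (m : ℕ) :
    ‖(1 + z) ^ m - 1‖ ≤ (m : ℝ) * 2 ^ m * ‖z‖ := by
  have key : (1 + z) ^ m - 1 = (∑ i ∈ Finset.range m, (1 + z) ^ i) * z := by
    have := geom_sum_mul (1 + z) m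
    simpa using this.symm
  rw [key, norm_mul]
  gcongr
  calc ‖∑ i ∈ Finset.range m, (1 + z) ^ i‖
      ≤ ∑ i ∈ Finset.range m, ‖(1 + z) ^ i‖ := norm_sum_le _ _
    _ ≤ ∑ i ∈ Finset.range m, (2:ℝ) ^ m := by
        apply Finset.sum_le_sum
        intro i hi
        rw [norm_pow]
        have h2 : ‖1 + z‖ ≤ 2 := by
          calc ‖1 + z‖ ≤ ‖(1:𝕜)‖ + ‖z‖ := norm_add_le _ _
            _ ≤ 1 + 1 := by simp [hz]
            _ = 2 := by norm_num
        calc ‖1 + z‖ ^ i ≤ 2 ^ i := pow_le_pow_left₀ (norm_nonneg _) h2 i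
          _ ≤ 2 ^ m := pow_le_pow_right₀ (by norm_num) (Finset.mem_range.mp hi).le
    _ = (m : ℝ) * 2 ^ m := by simp [Finset.sum_const, mul_comm]


/-- A sequence `x` in `E` is weakly `q`-summable (`0 < q < ∞`), i.e. belongs to `ℓ_q^w(E)`:
`∑_j ‖φ (x j)‖^q < ∞` for every continuous linear functional `φ`. -/
def WeaklySummable (𝕜 : Type*) [RCLike 𝕜] {E : Type*} [NormedAddCommGroup E]
    [NormedSpace 𝕜 E] (q : ℝ) (x : ℕ → E) : Prop :=
  ∀ φ : E →L[𝕜] 𝕜, Summable fun j => ‖φ (x j)‖ ^ q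

/-- Let `E ≠ {0}`, `n ≥ 1` and `0 < s ≤ r < ∞`. If every continuous
`n`-homogeneous polynomial `P : E → F` (i.e. `P x = A (x,…,x)` for a continuous `n`-linear
`A`) is absolutely `(r;s)`-summing at every point of `E`, then every continuous linear map
`T : E → F` is absolutely `(r;s)`-summing. -/
theorem linear_summing_of_polynomial_summing_everywhere
    {𝕜 : Type*} [RCLike 𝕜] {E F : Type*}
    [NormedAddCommGroup E] [NormedSpace 𝕜 E] [CompleteSpace E] [Nontrivial E]
    [NormedAddCommGroup F] [NormedSpace 𝕜 F] [CompleteSpace F]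
    {n : ℕ} (hn : 1 ≤ n) {r s : ℝ} (hs : 0 < s) (hsr : s ≤ r)
    (hpoly : ∀ (A : ContinuousMultilinearMap 𝕜 (fun _ : Fin n => E) F) (a : E)
      (x : ℕ → E), WeaklySummable 𝕜 s x →
        Summable fun j => ‖A (fun _ => a + x j) - A (fun _ => a)‖ ^ r) :
    ∀ (T : E →L[𝕜] F) (x : ℕ → E), WeaklySummable 𝕜 s x →
      Summable fun j => ‖T (x j)‖ ^ r := by
  intro T x hx
  have hr : 0 < r := hs.trans_le hsr
  obtain ⟨m, rfl⟩ : ∃ m, n = m + 1 := ⟨n - 1, (Nat.succ_pred_eq_of_pos hn).symm⟩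
  -- a functional φ and a point e₀ with φ e₀ = 1
  obtain ⟨e₀, he₀⟩ := exists_ne (0 : E)
  obtain ⟨g, hg1, hge⟩ := exists_dual_vector 𝕜 e₀ (norm_ne_zero_iff.mpr he₀)
  set φ : E →L[𝕜] 𝕜 := ((‖e₀‖ : 𝕜))⁻¹ • g with hφdef
  have hnorm_ne : ((‖e₀‖ : 𝕜)) ≠ 0 := by
    simpa using norm_ne_zero_iff.mpr he₀
  have hφe : φ e₀ = 1 := by
    simp only [hφdef, ContinuousLinearMap.smul_apply, hge, smul_eq_mul]
    exact inv_mul_cancel₀ hnorm_ne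
  -- the polynomial P y = (φ y)^m • T y
  set A : ContinuousMultilinearMap 𝕜 (fun _ : Fin (m + 1) => E) F :=
    (((ContinuousMultilinearMap.mkPiRing 𝕜 (Fin m) T).compContinuousLinearMap
      (fun _ => φ))).uncurryRight with hAdef
  have hA : ∀ y : E, A (fun _ => y) = (φ y) ^ m • T y := by
    intro y
    simp [hAdef, ContinuousMultilinearMap.uncurryRight_apply,
      ContinuousMultilinearMap.mkPiRing_apply, Fin.init]
  set c : ℕ → ℝ := fun j => ‖φ (x j)‖ with hcdef
  have hc_nonneg : ∀ j, 0 ≤ c j := fun j => norm_nonneg _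
  have hcs : Summable fun j => c j ^ s := hx φ
  -- c j → 0
  have hc0 : Tendsto c atTop (nhds 0) := by
    have h1 := hcs.tendsto_atTop_zero
    have h2 : Tendsto (fun j => (c j ^ s) ^ s⁻¹) atTop (nhds ((0:ℝ) ^ s⁻¹)) :=
      h1.rpow_const (Or.inr (by positivity))
    have h3 : (fun j => (c j ^ s) ^ s⁻¹) = c := by
      funext j
      exact Real.rpow_rpow_inv (hc_nonneg j) hs.ne'
    rw [h3, Real.zero_rpow (by positivity)] at h2
    exact h2
  -- eventually c j ≤ 1/2
  obtain ⟨N, hN⟩ : ∃ N, ∀ j ≥ N, c j ≤ 1 / 2 := by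
    have := hc0.eventually (gt_mem_nhds (by norm_num : (0:ℝ) < 1 / 2))
    rw [eventually_atTop] at this
    obtain ⟨N, hN⟩ := this
    exact ⟨N, fun j hj => (hN j hj).le⟩
  -- Summable c^r
  have hcr : Summable fun j => c j ^ r := by
    rw [← summable_nat_add_iff N]
    have hgs : Summable fun j => c (j + N) ^ s := (summable_nat_add_iff N).mpr hcs
    apply Summable.of_nonneg_of_le (fun j => Real.rpow_nonneg (hc_nonneg _) r) _ hgs
    · intro j
      rcases eq_or_lt_of_le (hc_nonneg (j + N)) with h0 | h0
      · rw [← h0, Real.zero_rpow hr.ne', Real.zero_rpow hs.ne']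
      · exact Real.rpow_le_rpow_of_exponent_ge h0
          (le_trans (hN _ (Nat.le_add_left N j)) (by norm_num)) hsr
  -- the polynomial summability gives
  set D : ℕ → F := fun j => A (fun _ => e₀ + x j) - A (fun _ => e₀) with hDdef
  have hD : Summable fun j => ‖D j‖ ^ r := hpoly A e₀ x hx
  -- key identity
  have hDeq : ∀ j, D j = (1 + φ (x j)) ^ m • T (x j) + ((1 + φ (x j)) ^ m - 1) • T e₀ := by
    intro j
    have := hA (e₀ + x j)
    rw [hDdef]
    simp only [hA, map_add, hφe]
    rw [smul_add, sub_smul, one_smul, one_pow, one_smul]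
    abel
  -- constants
  set K : ℝ := (m : ℝ) * 2 ^ m * ‖T e₀‖ with hKdef
  have hK0 : 0 ≤ K := by positivity
  -- main pointwise bound for j with c j ≤ 1/2
  have hbound : ∀ j, c j ≤ 1 / 2 →
      ‖T (x j)‖ ^ r ≤ ((2:ℝ) ^ m) ^ r * 2 ^ r * ‖D j‖ ^ r
        + ((2:ℝ) ^ m) ^ r * 2 ^ r * K ^ r * c j ^ r := by
    intro j hj
    set z : 𝕜 := φ (x j) with hzdef
    have hz1 : ‖z‖ ≤ 1 := le_trans hj (by norm_num)
    have hlow : (1:ℝ) / 2 ≤ ‖1 + z‖ := by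
      have h := norm_sub_norm_le (1 : 𝕜) (-z)
      simp only [sub_neg_eq_add, norm_one, norm_neg] at h
      have hcz : c j = ‖z‖ := rfl
      rw [hcz] at hj
      linarith
    -- ‖T x j‖ ≤ 2^m * ‖(1+z)^m • T (x j)‖
    have step1 : ‖T (x j)‖ ≤ 2 ^ m * ‖(1 + z) ^ m • T (x j)‖ := by
      rw [norm_smul, norm_pow]
      have h3 : (2:ℝ) ^ m * (((1:ℝ)/2) ^ m * ‖T (x j)‖) = ‖T (x j)‖ := by
        rw [← mul_assoc, ← mul_pow]
        norm_num
      calc ‖T (x j)‖ = (2:ℝ) ^ m * (((1:ℝ)/2) ^ m * ‖T (x j)‖) := h3.symm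
        _ ≤ (2:ℝ) ^ m * (‖1 + z‖ ^ m * ‖T (x j)‖) := by
            gcongr
    -- ‖(1+z)^m • T x j‖ ≤ ‖D j‖ + K * c j
    have step2 : ‖(1 + z) ^ m • T (x j)‖ ≤ ‖D j‖ + K * c j := by
      have heq : (1 + z) ^ m • T (x j) = D j - ((1 + z) ^ m - 1) • T e₀ := by
        rw [hDeq j]; abel
      rw [heq]
      calc ‖D j - ((1 + z) ^ m - 1) • T e₀‖
          ≤ ‖D j‖ + ‖((1 + z) ^ m - 1) • T e₀‖ := norm_sub_le _ _
        _ ≤ ‖D j‖ + K * c j := by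
            gcongr _ + ?_
            rw [norm_smul]
            calc ‖(1 + z) ^ m - 1‖ * ‖T e₀‖
                ≤ ((m : ℝ) * 2 ^ m * ‖z‖) * ‖T e₀‖ := by
                  gcongr
                  exact aux_pow_sub_one hz1 m
              _ = K * c j := by rw [hKdef]; ring
      -- done
    have step3 : ‖T (x j)‖ ≤ 2 ^ m * (‖D j‖ + K * c j) := by
      calc ‖T (x j)‖ ≤ 2 ^ m * ‖(1 + z) ^ m • T (x j)‖ := step1
        _ ≤ 2 ^ m * (‖D j‖ + K * c j) := by gcongr
    calc ‖T (x j)‖ ^ r ≤ ((2:ℝ) ^ m * (‖D j‖ + K * c j)) ^ r := by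
          apply Real.rpow_le_rpow (norm_nonneg _) step3 hr.le
      _ = ((2:ℝ) ^ m) ^ r * (‖D j‖ + K * c j) ^ r := by
          rw [Real.mul_rpow (by positivity) (by positivity)]
      _ ≤ ((2:ℝ) ^ m) ^ r * (2 ^ r * (‖D j‖ ^ r + (K * c j) ^ r)) := by
          gcongr
          exact aux_add_rpow_le (norm_nonneg _) (by positivity) hr.le
      _ = ((2:ℝ) ^ m) ^ r * 2 ^ r * ‖D j‖ ^ r
            + ((2:ℝ) ^ m) ^ r * 2 ^ r * K ^ r * c j ^ r := by
          rw [Real.mul_rpow hK0 (hc_nonneg j)]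
          ring
  -- conclude by comparison after shifting by N
  rw [← summable_nat_add_iff N]
  have hgsum : Summable fun j => ((2:ℝ) ^ m) ^ r * 2 ^ r * ‖D (j + N)‖ ^ r
        + ((2:ℝ) ^ m) ^ r * 2 ^ r * K ^ r * c (j + N) ^ r :=
    (((summable_nat_add_iff N).mpr hD).mul_left _).add
      (((summable_nat_add_iff N).mpr hcr).mul_left _)
  exact Summable.of_nonneg_of_le (fun j => Real.rpow_nonneg (norm_nonneg _) r)
    (fun j => hbound (j + N) (hN _ (Nat.le_add_left N j))) hgsum
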